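/- For a critical or sub-critical Galton-Watson process (m ≤ 1) whose offspring distribution p satisfies 0 < p(0) < 1 and p(0)+p(1) < 1, extinction occurs almost surely: P(∃ n ∈ ℕ such that Z_n = 0) = 1. -/

import Mathlib

open MeasureTheory ProbabilityTheory Filter Set
open scoped ENNReal

noncomputable section

namespace GWPaper

/-- The Galton-Watson process built from the array `ζ = (ζ_{i,n}; i ∈ ℕ, n ∈ ℕ)`:
`Z 0 = 1` and `Z n = ∑_{i=1}^{Z (n-1)} ζ_{i, n}` for `n ≥ 1` (empty sum = 0). -/
def gwZ {Ω : Type*} (ζ : ℕ × ℕ → Ω → ℕ) : ℕ → Ω → ℕ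
  | 0 => fun _ => 1
  | n + 1 => fun ω => ∑ i ∈ Finset.range (gwZ ζ n ω), ζ (i, n + 1) ω

section Aux

def gee (p : ℕ → ℝ≥0∞) (s : ℝ≥0∞) : ℝ≥0∞ := ∑' k, p k * s ^ k

variable {Ω : Type*} [MeasurableSpace Ω] {P : Measure Ω} {ζ : ℕ × ℕ → Ω → ℕ}

/-- σ-algebra generated by the variables indexed by `S` -/
def colM (ζ : ℕ × ℕ → Ω → ℕ) (S : Set (ℕ × ℕ)) : MeasurableSpace Ω :=
  ⨆ x ∈ S, MeasurableSpace.comap (ζ x) inferInstance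

lemma comap_le_colM {S : Set (ℕ × ℕ)} {x : ℕ × ℕ} (hx : x ∈ S) :
    MeasurableSpace.comap (ζ x) inferInstance ≤ colM ζ S :=
  le_biSup (fun x => MeasurableSpace.comap (ζ x) inferInstance) hx

lemma colM_mono {S T : Set (ℕ × ℕ)} (h : S ⊆ T) : colM ζ S ≤ colM ζ T :=
  biSup_mono h

lemma colM_le (hmeas : ∀ i, Measurable (ζ i)) (S : Set (ℕ × ℕ)) :
    colM ζ S ≤ ‹MeasurableSpace Ω› :=
  iSup₂_le fun x _ => MeasurableSpace.comap_le_iff_le_map.mpr fun s hs =>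
    (hmeas x) hs

lemma zeta_meas_colM {S : Set (ℕ × ℕ)} {x : ℕ × ℕ} (hx : x ∈ S) :
    Measurable[colM ζ S] (ζ x) :=
  (Measurable.of_comap_le le_rfl).mono (comap_le_colM hx) le_rfl

lemma gwZ_meas_colM (ζ : ℕ × ℕ → Ω → ℕ) (n : ℕ) :
    Measurable[colM ζ {x | x.2 ≤ n}] (gwZ ζ n) := by
  induction n with
  | zero => exact @measurable_const _ _ _ (colM ζ _) _
  | succ n ih =>
    have ih' : Measurable[colM ζ {x | x.2 ≤ n + 1}] (gwZ ζ n) :=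
      ih.mono (colM_mono fun x hx => le_trans hx (Nat.le_succ n)) le_rfl
    apply @measurable_to_countable' _ _ _ _ (colM ζ {x | x.2 ≤ n + 1})
    intro k
    have hset : gwZ ζ (n+1) ⁻¹' {k} =
        ⋃ m, gwZ ζ n ⁻¹' {m} ∩
          (fun ω => ∑ i ∈ Finset.range m, ζ (i, n+1) ω) ⁻¹' {k} := by
      ext ω
      simp only [Set.mem_preimage, Set.mem_singleton_iff, Set.mem_iUnion, Set.mem_inter_iff]
      constructor
      · intro h; exact ⟨gwZ ζ n ω, rfl, h⟩
      · rintro ⟨m, hm, h⟩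
        show (∑ i ∈ Finset.range (gwZ ζ n ω), ζ (i, n+1) ω) = k
        rw [hm]; exact h
    rw [hset]
    apply MeasurableSet.iUnion
    intro m
    refine MeasurableSet.inter (ih' (measurableSet_singleton m)) ?_
    have hsum : Measurable[colM ζ {x | x.2 ≤ n + 1}]
        (fun ω => ∑ i ∈ Finset.range m, ζ (i, n+1) ω) := by
      apply Finset.measurable_sum
      intro i _
      exact zeta_meas_colM (by simp)
    exact hsum (measurableSet_singleton k)

lemma gwZ_meas (hmeas : ∀ i, Measurable (ζ i)) (n : ℕ) : Measurable (gwZ ζ n) :=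
  (gwZ_meas_colM ζ n).mono (colM_le hmeas _) le_rfl

/-- expectation of φ of a ℕ-valued random variable -/
lemma lintegral_comp_nat (P : Measure Ω) {X : Ω → ℕ} (hX : Measurable X) (φ : ℕ → ℝ≥0∞) :
    ∫⁻ ω, φ (X ω) ∂P = ∑' k, φ k * P (X ⁻¹' {k}) := by
  rw [← lintegral_map measurable_from_top hX, lintegral_countable' φ]
  congr 1
  funext k
  rw [Measure.map_apply hX (measurableSet_singleton k)]

lemma lintegral_pow_zeta (hmeas : ∀ i, Measurable (ζ i)) {p : ℕ → ℝ≥0∞}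
    (hlaw : ∀ (i : ℕ × ℕ) (k : ℕ), P {ω | ζ i ω = k} = p k) (x : ℕ × ℕ) (s : ℝ≥0∞) :
    ∫⁻ ω, s ^ ζ x ω ∂P = gee p s := by
  rw [lintegral_comp_nat P (hmeas x) (fun k => s ^ k)]
  unfold gee
  refine tsum_congr fun k => ?_
  rw [mul_comm]
  congr 1
  exact hlaw x k

lemma step_prod (hmeas : ∀ i, Measurable (ζ i))
    (hindep : iIndepFun ζ P) {p : ℕ → ℝ≥0∞}
    (hlaw : ∀ (i : ℕ × ℕ) (k : ℕ), P {ω | ζ i ω = k} = p k)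
    (n : ℕ) {A : Set Ω} (hA : MeasurableSet[colM ζ {x | x.2 ≤ n}] A) (s : ℝ≥0∞) :
    ∀ j : ℕ, ∫⁻ ω, A.indicator (fun ω => ∏ i ∈ Finset.range j, s ^ ζ (i, n+1) ω) ω ∂P
      = P A * (gee p s) ^ j := by
  have hAmeas : MeasurableSet A := colM_le hmeas _ _ hA
  intro j
  induction j with
  | zero =>
    simp only [Finset.range_zero, Finset.prod_empty, pow_zero, mul_one]
    exact lintegral_indicator_one hAmeas
  | succ j ih =>
    -- split the integrand as f * g
    set Sj : Set (ℕ × ℕ) := {x | x.2 ≤ n ∨ (x.2 = n + 1 ∧ x.1 < j)} with hSj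
    have hpt : ∀ ω, A.indicator (fun ω => ∏ i ∈ Finset.range (j+1), s ^ ζ (i, n+1) ω) ω
        = (A.indicator (fun ω => ∏ i ∈ Finset.range j, s ^ ζ (i, n+1) ω) ω) * s ^ ζ (j, n+1) ω := by
      intro ω
      by_cases hω : ω ∈ A
      · simp [Set.indicator_of_mem hω, Finset.prod_range_succ]
      · simp [Set.indicator_of_notMem hω]
    simp only [hpt]
    have hMf_le : colM ζ Sj ≤ ‹MeasurableSpace Ω› := colM_le hmeas _
    have hMg_le : MeasurableSpace.comap (ζ (j, n+1)) inferInstance ≤ ‹MeasurableSpace Ω› :=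
      MeasurableSpace.comap_le_iff_le_map.mpr fun t ht => (hmeas _) ht
    have hdisj : Disjoint Sj ({(j, n+1)} : Set (ℕ × ℕ)) := by
      rw [Set.disjoint_singleton_right]
      simp [hSj]
    have hindep' : Indep (colM ζ Sj) (MeasurableSpace.comap (ζ (j, n+1)) inferInstance) P := by
      have := indep_iSup_of_disjoint
        (fun x => MeasurableSpace.comap_le_iff_le_map.mpr fun t ht => (hmeas x) ht)
        hindep hdisj
      rwa [iSup_singleton] at this
    have hf : Measurable[colM ζ Sj]
        (fun ω => A.indicator (fun ω => ∏ i ∈ Finset.range j, s ^ ζ (i, n+1) ω) ω) := by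
      apply Measurable.indicator
      · apply Finset.measurable_prod
        intro i hi
        exact measurable_from_top.comp
          (zeta_meas_colM (by simp [hSj, Finset.mem_range.mp hi]))
      · exact colM_mono (fun x hx => Or.inl hx) _ hA
    have hg : Measurable[MeasurableSpace.comap (ζ (j, n+1)) inferInstance]
        (fun ω => s ^ ζ (j, n+1) ω) :=
      measurable_from_top.comp (Measurable.of_comap_le le_rfl)
    rw [lintegral_mul_eq_lintegral_mul_lintegral_of_independent_measurableSpace
        hMf_le hMg_le hindep' hf hg, ih,
      lintegral_pow_zeta hmeas hlaw (j, n+1) s, pow_succ, mul_assoc]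

lemma step (hmeas : ∀ i, Measurable (ζ i))
    (hindep : iIndepFun ζ P) {p : ℕ → ℝ≥0∞}
    (hlaw : ∀ (i : ℕ × ℕ) (k : ℕ), P {ω | ζ i ω = k} = p k) (n : ℕ) (s : ℝ≥0∞) :
    ∫⁻ ω, s ^ gwZ ζ (n+1) ω ∂P = ∫⁻ ω, (gee p s) ^ gwZ ζ n ω ∂P := by
  have hpt : ∀ ω, s ^ gwZ ζ (n+1) ω
      = ∑' k, (gwZ ζ n ⁻¹' {k}).indicator
          (fun ω => ∏ i ∈ Finset.range k, s ^ ζ (i, n+1) ω) ω := by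
    intro ω
    rw [tsum_eq_single (gwZ ζ n ω) ?_]
    · rw [Set.indicator_of_mem (show ω ∈ gwZ ζ n ⁻¹' {gwZ ζ n ω} from rfl)]
      show s ^ (∑ i ∈ Finset.range (gwZ ζ n ω), ζ (i, n+1) ω) = _
      rw [← Finset.prod_pow_eq_pow_sum]
    · intro k hk
      exact Set.indicator_of_notMem
        (show ω ∉ gwZ ζ n ⁻¹' {k} from fun h => hk (Set.mem_singleton_iff.mp h).symm) _
  simp only [hpt]
  rw [lintegral_tsum]
  · have hterm : ∀ k : ℕ, ∫⁻ ω, (gwZ ζ n ⁻¹' {k}).indicator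
        (fun ω => ∏ i ∈ Finset.range k, s ^ ζ (i, n+1) ω) ω ∂P
        = P (gwZ ζ n ⁻¹' {k}) * (gee p s) ^ k := fun k =>
      step_prod hmeas hindep hlaw n (gwZ_meas_colM ζ n (measurableSet_singleton k)) s k
    simp only [hterm]
    rw [lintegral_comp_nat P (gwZ_meas hmeas n) (fun k => (gee p s) ^ k)]
    exact tsum_congr fun k => mul_comm _ _
  · intro k
    apply Measurable.aemeasurable
    apply Measurable.indicator
    · exact Finset.measurable_prod _ fun i _ => measurable_from_top.comp (hmeas _)
    · exact (gwZ_meas hmeas n) (measurableSet_singleton k)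

lemma lintegral_pow_gwZ [IsProbabilityMeasure P] (hmeas : ∀ i, Measurable (ζ i))
    (hindep : iIndepFun ζ P) {p : ℕ → ℝ≥0∞}
    (hlaw : ∀ (i : ℕ × ℕ) (k : ℕ), P {ω | ζ i ω = k} = p k) (n : ℕ) (s : ℝ≥0∞) :
    ∫⁻ ω, s ^ gwZ ζ n ω ∂P = (gee p)^[n] s := by
  induction n generalizing s with
  | zero =>
    show ∫⁻ _, s ^ 1 ∂P = s
    simp [lintegral_const]
  | succ n ih =>
    rw [step hmeas hindep hlaw n s, ih (gee p s), ← Function.iterate_succ_apply]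

lemma prob_gwZ_zero [IsProbabilityMeasure P] (hmeas : ∀ i, Measurable (ζ i))
    (hindep : iIndepFun ζ P) {p : ℕ → ℝ≥0∞}
    (hlaw : ∀ (i : ℕ × ℕ) (k : ℕ), P {ω | ζ i ω = k} = p k) (n : ℕ) :
    P (gwZ ζ n ⁻¹' {0}) = (gee p)^[n] 0 := by
  have hpt : ∀ ω, (gwZ ζ n ⁻¹' {0}).indicator (1 : Ω → ℝ≥0∞) ω = (0 : ℝ≥0∞) ^ gwZ ζ n ω := by
    intro ω
    by_cases h : gwZ ζ n ω = 0
    · rw [Set.indicator_of_mem (show ω ∈ gwZ ζ n ⁻¹' {0} from h), h, pow_zero]; rfl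
    · rw [Set.indicator_of_notMem (show ω ∉ gwZ ζ n ⁻¹' {0} from h), zero_pow h]
  rw [← lintegral_pow_gwZ hmeas hindep hlaw n 0,
    ← lintegral_indicator_one ((gwZ_meas hmeas n) (measurableSet_singleton 0))]
  exact lintegral_congr hpt

lemma gee_iSup (p : ℕ → ℝ≥0∞) {u : ℕ → ℝ≥0∞} (hu : Monotone u) :
    gee p (⨆ n, u n) = ⨆ n, gee p (u n) := by
  have hpow : ∀ k : ℕ, (⨆ n, u n) ^ k = ⨆ n, u n ^ k := by
    intro k
    cases k with
    | zero => simp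
    | succ k =>
      refine Monotone.map_iSup_of_continuousAt ?_ (fun a b hab => pow_le_pow_left' hab _) ?_
      · exact (ENNReal.continuous_pow _).continuousAt
      · show (⊥ : ℝ≥0∞) ^ (k + 1) = ⊥
        simp
  unfold gee
  have h1 : ∀ k : ℕ, p k * (⨆ n, u n) ^ k = ⨆ n, p k * u n ^ k := by
    intro k
    rw [hpow k, ENNReal.mul_iSup]
  simp only [h1]
  rw [← lintegral_count, lintegral_iSup]
  · exact iSup_congr fun n => lintegral_count _
  · exact fun n => measurable_from_top
  · intro a b hab k
    exact mul_le_mul_right (pow_le_pow_left' (hu hab) _) _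

lemma gee_mono (p : ℕ → ℝ≥0∞) : Monotone (gee p) := fun a b hab =>
  ENNReal.tsum_le_tsum fun k => mul_le_mul_right (pow_le_pow_left' hab k) _

lemma gee_gt (p : ℕ → ℝ≥0∞) (hp : ∑' n, p n = 1) (hp01 : p 0 + p 1 < 1)
    (hmean : ∑' n : ℕ, (n : ℝ≥0∞) * p n ≤ 1) {s : ℝ≥0∞} (hs : s < 1) :
    s < gee p s := by
  have hpk : ∀ k, p k ≤ 1 := fun k => hp ▸ ENNReal.le_tsum k
  have hpk' : ∀ k, p k ≠ ⊤ := fun k => ((hpk k).trans_lt ENNReal.one_lt_top).ne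
  have hs1 : s ≤ 1 := hs.le
  have hsne : s ≠ ⊤ := (hs.trans ENNReal.one_lt_top).ne
  -- gee p s ≤ 1 hence ≠ ⊤
  have hgle : gee p s ≤ 1 := by
    calc gee p s ≤ ∑' k, p k := ENNReal.tsum_le_tsum fun k => by
          calc p k * s ^ k ≤ p k * 1 := mul_le_mul_right (pow_le_one' hs1 k) _
          _ = p k := mul_one _
    _ = 1 := hp
  have hgne : gee p s ≠ ⊤ := (hgle.trans_lt ENNReal.one_lt_top).ne
  -- pass to ℝ
  set t : ℝ := s.toReal with ht
  have ht0 : 0 ≤ t := ENNReal.toReal_nonneg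
  have ht1 : t < 1 := by
    have := (ENNReal.toReal_lt_toReal hsne ENNReal.one_ne_top).mpr hs
    simpa using this
  set q : ℕ → ℝ := fun k => (p k).toReal with hq
  have hq0 : ∀ k, 0 ≤ q k := fun k => ENNReal.toReal_nonneg
  have hqsum : Summable q := ENNReal.summable_toReal (hp ▸ ENNReal.one_ne_top)
  have hqtsum : ∑' k, q k = 1 := by
    rw [← ENNReal.tsum_toReal_eq hpk', hp, ENNReal.toReal_one]
  have hmne : ∑' n : ℕ, (n : ℝ≥0∞) * p n ≠ ⊤ := (hmean.trans_lt ENNReal.one_lt_top).ne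
  have hmk : ∀ k : ℕ, (k : ℝ≥0∞) * p k ≠ ⊤ := fun k =>
    ((ENNReal.le_tsum k).trans_lt (hmean.trans_lt ENNReal.one_lt_top)).ne
  have hmsum : Summable (fun k : ℕ => (k : ℝ) * q k) := by
    have := ENNReal.summable_toReal hmne
    simpa [ENNReal.toReal_mul] using this
  have hmtsum : ∑' k : ℕ, (k : ℝ) * q k ≤ 1 := by
    have h1 := ENNReal.tsum_toReal_eq hmk
    have h2 : (∑' n : ℕ, (n : ℝ≥0∞) * p n).toReal ≤ 1 := by
      simpa using ENNReal.toReal_mono ENNReal.one_ne_top hmean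
    rw [h1] at h2
    simpa [ENNReal.toReal_mul] using h2
  -- toReal of gee
  have hgee : (gee p s).toReal = ∑' k, q k * t ^ k := by
    rw [gee, ENNReal.tsum_toReal_eq (fun k => ENNReal.mul_ne_top (hpk' k) (ENNReal.pow_ne_top hsne))]
    simp [ENNReal.toReal_mul, ENNReal.toReal_pow]
    rfl
  -- find k0 ≥ 2 with p k0 ≠ 0
  obtain ⟨k0, hk0ge, hk0⟩ : ∃ k, 2 ≤ k ∧ p k ≠ 0 := by
    by_contra h
    push_neg at h
    have : ∑' n, p n = ∑ n ∈ Finset.range 2, p n := by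
      refine tsum_eq_sum fun b hb => ?_
      exact h b (by simp at hb; omega)
    rw [hp] at this
    simp [Finset.sum_range_succ] at this
    exact absurd (this ▸ hp01) (lt_irrefl _)
  have hqk0 : 0 < q k0 := ENNReal.toReal_pos hk0 (hpk' k0)
  -- the real inequality: t < ∑' k, q k * t^k
  have key : t < ∑' k, q k * t ^ k := by
    have hsummand : Summable (fun k => q k * t ^ k) := by
      apply Summable.of_nonneg_of_le (fun k => by positivity) (fun k => ?_) hqsum
      calc q k * t ^ k ≤ q k * 1 := by
            exact mul_le_mul_of_nonneg_left (pow_le_one₀ ht0 ht1.le) (hq0 k)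
      _ = q k := mul_one _
    -- a k = q k (1 - t^k), b k = (1-t) * (k * q k)
    have hab : ∀ k, q k * (1 - t ^ k) ≤ (1 - t) * ((k : ℝ) * q k) := by
      intro k
      have hgeom : 1 - t ^ k = (1 - t) * ∑ i ∈ Finset.range k, t ^ i := by
        have := geom_sum_mul t k
        nlinarith [this]
      have hsumle : ∑ i ∈ Finset.range k, t ^ i ≤ (k : ℝ) := by
        calc ∑ i ∈ Finset.range k, t ^ i ≤ ∑ i ∈ Finset.range k, 1 :=
              Finset.sum_le_sum fun i _ => pow_le_one₀ ht0 ht1.le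
        _ = (k : ℝ) := by simp
      rw [hgeom]
      have h1t : 0 ≤ 1 - t := by linarith
      calc q k * ((1 - t) * ∑ i ∈ Finset.range k, t ^ i)
          ≤ q k * ((1 - t) * k) := by
            exact mul_le_mul_of_nonneg_left (mul_le_mul_of_nonneg_left hsumle h1t) (hq0 k)
      _ = (1 - t) * ((k : ℝ) * q k) := by ring
    have hablt : q k0 * (1 - t ^ k0) < (1 - t) * ((k0 : ℝ) * q k0) := by
      have hgeom : 1 - t ^ k0 = (1 - t) * ∑ i ∈ Finset.range k0, t ^ i := by
        have := geom_sum_mul t k0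
        nlinarith [this]
      have hsumlt : ∑ i ∈ Finset.range k0, t ^ i < (k0 : ℝ) := by
        have : ∑ i ∈ Finset.range k0, t ^ i < ∑ i ∈ Finset.range k0, 1 := by
          refine Finset.sum_lt_sum (fun i _ => pow_le_one₀ ht0 ht1.le) ⟨1, ?_, ?_⟩
          · exact Finset.mem_range.mpr (by omega)
          · simpa using ht1
        simpa using this
      rw [hgeom]
      have h1t : 0 < 1 - t := by linarith
      calc q k0 * ((1 - t) * ∑ i ∈ Finset.range k0, t ^ i)
          < q k0 * ((1 - t) * k0) := by
            apply mul_lt_mul_of_pos_left _ hqk0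
            exact mul_lt_mul_of_pos_left hsumlt h1t
      _ = (1 - t) * ((k0 : ℝ) * q k0) := by ring
    have hsa : Summable (fun k => q k * (1 - t ^ k)) := by
      have : (fun k => q k * (1 - t ^ k)) = fun k : ℕ => q k - q k * t ^ k := by
        funext k; ring
      rw [this]
      exact hqsum.sub hsummand
    have hsb : Summable (fun k : ℕ => (1 - t) * ((k : ℝ) * q k)) := hmsum.mul_left _
    have hlt : ∑' k, q k * (1 - t ^ k) < ∑' k : ℕ, (1 - t) * ((k : ℝ) * q k) :=
      Summable.tsum_lt_tsum hab hablt hsa hsb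
    have hL : ∑' k, q k * (1 - t ^ k) = 1 - ∑' k, q k * t ^ k := by
      have : (fun k => q k * (1 - t ^ k)) = fun k : ℕ => q k - q k * t ^ k := by
        funext k; ring
      rw [this, Summable.tsum_sub hqsum hsummand, hqtsum]
    have hR : ∑' k : ℕ, (1 - t) * ((k : ℝ) * q k) ≤ 1 - t := by
      rw [tsum_mul_left]
      calc (1 - t) * ∑' k : ℕ, (k : ℝ) * q k ≤ (1 - t) * 1 :=
            mul_le_mul_of_nonneg_left hmtsum (by linarith)
      _ = 1 - t := mul_one _
    rw [hL] at hlt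
    linarith [hlt.trans_le hR]
  rw [← ENNReal.toReal_lt_toReal hsne hgne, hgee]
  exact key


end Aux

/-- for a critical or sub-critical Galton-Watson process (mean `m ≤ 1`) whose
offspring distribution `p` satisfies `0 < p 0 < 1` and `p 0 + p 1 < 1`, extinction occurs
almost surely: `P(∃ n, Z_n = 0) = 1`. -/
theorem gw_extinction_critical_subcritical
    {Ω : Type*} [MeasurableSpace Ω] (P : Measure Ω) [IsProbabilityMeasure P]
    (p : ℕ → ℝ≥0∞) (hp : ∑' n, p n = 1)
    (hp0 : 0 < p 0) (hp0' : p 0 < 1) (hp01 : p 0 + p 1 < 1)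
    (hmean : ∑' n : ℕ, (n : ℝ≥0∞) * p n ≤ 1)
    (ζ : ℕ × ℕ → Ω → ℕ)
    (hmeas : ∀ i, Measurable (ζ i))
    (hindep : iIndepFun ζ P)
    (hlaw : ∀ (i : ℕ × ℕ) (k : ℕ), P {ω | ζ i ω = k} = p k) :
    P {ω | ∃ n : ℕ, gwZ ζ n ω = 0} = 1 := by
  classical
  set G : ℝ≥0∞ → ℝ≥0∞ := gee p with hG
  set u : ℕ → ℝ≥0∞ := fun n => G^[n] 0 with hu
  have hGmono : Monotone G := gee_mono p
  have husucc : ∀ n, u (n+1) = G (u n) := fun n => Function.iterate_succ_apply' G n 0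
  have humono : Monotone u := by
    apply monotone_nat_of_le_succ
    intro n
    induction n with
    | zero => simp [hu]
    | succ n ih =>
      rw [husucc n, husucc (n+1)]
      exact hGmono ih
  set A : ℕ → Set Ω := fun n => gwZ ζ n ⁻¹' {0} with hA
  have hAmono : Monotone A := by
    apply monotone_nat_of_le_succ
    intro n ω hω
    have h0 : gwZ ζ n ω = 0 := hω
    show (∑ i ∈ Finset.range (gwZ ζ n ω), ζ (i, n+1) ω) = 0
    rw [h0, Finset.range_zero, Finset.sum_empty]
  have hU : {ω | ∃ n : ℕ, gwZ ζ n ω = 0} = ⋃ n, A n := by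
    ext ω; simp [hA]
  rw [hU, hAmono.directed_le.measure_iUnion]
  have hPA : ∀ n, P (A n) = u n := fun n => prob_gwZ_zero hmeas hindep hlaw n
  simp only [hPA]
  set L := ⨆ n, u n with hL
  have hL1 : L ≤ 1 := iSup_le fun n => by
    rw [← hPA n]; exact prob_le_one
  have hfix : G L = L := by
    apply le_antisymm
    · rw [hL, show G (⨆ n, u n) = gee p (⨆ n, u n) from rfl, gee_iSup p humono]
      refine iSup_le fun n => ?_
      have : gee p (u n) = u (n+1) := (husucc n).symm
      rw [this]
      exact le_iSup u (n+1)
    · refine iSup_le fun n => ?_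
      calc u n ≤ u (n+1) := humono (Nat.le_succ n)
      _ = G (u n) := husucc n
      _ ≤ G L := hGmono (le_iSup u n)
  rcases lt_or_ge L 1 with h | h
  · exact absurd hfix (gee_gt p hp hp01 hmean h).ne'
  · exact le_antisymm hL1 h
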